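/- Let F be a linear ordered field equipped with its order topology, X a completely F-regular space, and A(X,F) an intermediate ring. For f, g ∈ A(X,F), the annihilator of f in A(X,F) is contained in the annihilator of g in A(X,F) if and only if int_X Z(f) ⊆ int_X Z(g). -/

import Mathlib

open Set

/-- `Pz a` : the intersection of all minimal prime ideals of `R` which contain `a`. -/
def Pz {R : Type*} [CommRing R] (a : R) : Set R :=
  ⋂ P ∈ {P : Ideal R | P ∈ minimalPrimes R ∧ a ∈ P}, (P : Set R)

/-- A proper ideal `I` is a `z°`-ideal if `Pz a ⊆ I` for every `a ∈ I`. -/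
def IsZoIdeal {R : Type*} [CommRing R] (I : Ideal R) : Prop :=
  I ≠ ⊤ ∧ ∀ a ∈ I, Pz a ⊆ (I : Set R)

/-- The zero set `Z(f)` of a continuous function `f`. -/
def ZSet {X F : Type*} [TopologicalSpace X] [TopologicalSpace F] [Zero F]
    (f : C(X, F)) : Set X := {x | f x = 0}

/-- `f` is bounded over `X` (i.e. `f ∈ B(X,F)`). -/
def BddF {X F : Type*} [TopologicalSpace X] [Field F] [LinearOrder F] [IsStrictOrderedRing F] [TopologicalSpace F]
    (f : C(X, F)) : Prop := ∃ l : F, 0 < l ∧ ∀ x, |f x| ≤ l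

/-- `X` is completely `F`-regular: Hausdorff, and points can be separated from closed
sets by bounded `F`-valued continuous functions. -/
def CompletelyFRegular (X F : Type*) [TopologicalSpace X] [Field F] [LinearOrder F] [IsStrictOrderedRing F]
    [TopologicalSpace F] : Prop :=
  T2Space X ∧ ∀ K : Set X, IsClosed K → ∀ x ∉ K, ∃ f : C(X, F),
    BddF f ∧ f x = 0 ∧ ∀ k ∈ K, f k = 1

/-- `A` is an intermediate ring: a subring of `C(X,F)` containing all of `B(X,F)`. -/
def IsIntermediate {X F : Type*} [TopologicalSpace X] [Field F] [LinearOrder F] [IsStrictOrderedRing F]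
    [TopologicalSpace F] [OrderTopology F] (A : Subring C(X, F)) : Prop :=
  ∀ f : C(X, F), BddF f → f ∈ A

/-- An ideal of closed sets in `X`: a nonempty family of closed sets, closed under
finite unions and under passing to closed subsets. -/
def IsIdealOfClosedSets {X : Type*} [TopologicalSpace X] (P : Set (Set X)) : Prop :=
  P.Nonempty ∧ (∀ A ∈ P, IsClosed A) ∧ (∀ A ∈ P, ∀ B ∈ P, A ∪ B ∈ P) ∧
    ∀ C : Set X, IsClosed C → ∀ A ∈ P, C ⊆ A → C ∈ P

/-- `X` is an almost `P_F`-space: every nonempty zero set has nonempty interior. -/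
def AlmostPF (X F : Type*) [TopologicalSpace X] [Field F] [LinearOrder F] [IsStrictOrderedRing F]
    [TopologicalSpace F] : Prop :=
  ∀ f : C(X, F), (ZSet f).Nonempty → (interior (ZSet f)).Nonempty


/-- For f, g in an intermediate ring A(X,F), Ann(f) ⊆ Ann(g) iff
int_X Z(f) ⊆ int_X Z(g). -/
theorem stmt0 {X F : Type*} [TopologicalSpace X] [Field F] [LinearOrder F] [IsStrictOrderedRing F]
    [TopologicalSpace F] [OrderTopology F]
    (hX : CompletelyFRegular X F)
    (A : Subring C(X, F)) (hA : IsIntermediate A)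
    (f g : A) :
    {h : A | f * h = 0} ⊆ {h : A | g * h = 0} ↔
      interior (ZSet (f : C(X, F))) ⊆ interior (ZSet (g : C(X, F))) := by
  obtain ⟨hT2, hreg⟩ := hX
  have hcozopen : ∀ h : C(X, F), IsOpen {y | h y ≠ 0} := fun h =>
    isOpen_ne.preimage h.continuous
  constructor
  · intro hann x hx
    obtain ⟨h', hb', hx', hK'⟩ := hreg (interior (ZSet (f : C(X, F))))ᶜ
      isOpen_interior.isClosed_compl x (by simpa using hx)
    set h : C(X, F) := 1 - h' with hh
    have hbh : BddF h := by
      obtain ⟨l, hl, hb⟩ := hb'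
      refine ⟨1 + l, by linarith, fun y => ?_⟩
      have h1 : |(1 : F) - h' y| ≤ |(1 : F)| + |h' y| := abs_sub _ _
      have h2 := hb y
      simp only [hh, ContinuousMap.sub_apply, ContinuousMap.one_apply]
      calc |(1 : F) - h' y| ≤ |(1 : F)| + |h' y| := h1
        _ ≤ 1 + l := by rw [abs_one]; linarith
    have hmem : h ∈ A := hA h hbh
    have hcoz : ∀ y, h y ≠ 0 → y ∈ interior (ZSet (f : C(X, F))) := by
      intro y hy
      by_contra hyc
      exact hy (by simp [hh, hK' y hyc])
    have hfh : f * ⟨h, hmem⟩ = 0 := by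
      apply Subtype.ext
      ext y
      by_cases hy : h y = 0
      · simp [hy]
      · have hz : y ∈ ZSet (f : C(X, F)) := interior_subset (hcoz y hy)
        have : (f : C(X, F)) y = 0 := hz
        simp [this]
    have hgh := hann hfh
    have hgh' : ∀ y, (g : C(X, F)) y * h y = 0 := by
      intro y
      have := congrArg (fun u : A => (u : C(X, F)) y) hgh
      simpa using this
    have hsub : {y | h y ≠ 0} ⊆ ZSet (g : C(X, F)) := by
      intro y hy
      have := hgh' y
      rcases mul_eq_zero.mp this with h0 | h0
      · exact h0
      · exact absurd h0 hy
    have hxcoz : x ∈ {y | h y ≠ 0} := by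
      have : h x = 1 := by simp [hh, hx']
      simp [this]
    exact interior_maximal hsub (hcozopen h) hxcoz
  · intro hint h hfh
    have hfh' : ∀ y, (f : C(X, F)) y * (h : C(X, F)) y = 0 := by
      intro y
      have := congrArg (fun u : A => (u : C(X, F)) y) hfh
      simpa using this
    have hsub : {y | (h : C(X, F)) y ≠ 0} ⊆ interior (ZSet (g : C(X, F))) := by
      have h1 : {y | (h : C(X, F)) y ≠ 0} ⊆ ZSet (f : C(X, F)) := by
        intro y hy
        rcases mul_eq_zero.mp (hfh' y) with h0 | h0
        · exact h0
        · exact absurd h0 hy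
      exact (interior_maximal h1 (hcozopen _)).trans hint
    apply Subtype.ext
    ext y
    by_cases hy : (h : C(X, F)) y = 0
    · simp [hy]
    · have hz : y ∈ ZSet (g : C(X, F)) := interior_subset (hsub hy)
      have : (g : C(X, F)) y = 0 := hz
      simp [this]
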